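/- Let 1 ≤ p < ∞ and let T be a bounded linear operator on the real Banach space ℓ^p. Suppose there exists a bounded linear operator M on ℓ^p whose matrix is the entrywise absolute value of the matrix of T, i.e. for all indices i, j one has (M f_j)_i = |(T f_j)_i|, where (f_j) denotes the sequence of standard unit vectors (so M is the modulus of T). If M is quasinilpotent (its spectral radius is 0), then T admits a nontrivial closed invariant ideal: a closed linear subspace J of ℓ^p with J ≠ {0}, J ≠ ℓ^p, T(J) ⊆ J, and which is solid, meaning that if x ∈ J and y ∈ ℓ^p satisfy |y_i| ≤ |x_i| for all i, then y ∈ J. -/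

import Mathlib

open Filter Topology ENNReal

namespace ModulusQN

variable {p : ℝ≥0∞}

/-- Coordinate evaluation as a continuous linear map on `ℓᵖ`. -/
noncomputable def ev (p : ℝ≥0∞) [Fact (1 ≤ p)] (k : ℕ) :
    lp (fun _ : ℕ => ℝ) p →L[ℝ] ℝ :=
  LinearMap.mkContinuous
    { toFun := fun x => x k
      map_add' := fun x y => by simp [lp.coeFn_add]
      map_smul' := fun c x => by simp [lp.coeFn_smul] }
    1 (fun x => by
      have h := lp.norm_apply_le_norm
        (show p ≠ 0 from (zero_lt_one.trans_le (Fact.out : 1 ≤ p)).ne') x k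
      show ‖x k‖ ≤ 1 * ‖x‖
      simpa using h)

@[simp] lemma ev_apply [Fact (1 ≤ p)] (k : ℕ) (x : lp (fun _ : ℕ => ℝ) p) :
    ev p k x = x k := rfl

/-- Coordinatewise expansion of a bounded operator applied to `x`. -/
lemma hasSum_apply [Fact (1 ≤ p)] (hp : p ≠ ∞)
    (A : lp (fun _ : ℕ => ℝ) p →L[ℝ] lp (fun _ : ℕ => ℝ) p)
    (x : lp (fun _ : ℕ => ℝ) p) (k : ℕ) :
    HasSum (fun l : ℕ => x l * A (lp.single p l 1) k) (A x k) := by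
  have h := ((ev p k).comp A).hasSum (lp.hasSum_single hp x)
  have hterm : ∀ l : ℕ,
      ((ev p k).comp A) (lp.single p l (x l)) = x l * A (lp.single p l 1) k := by
    intro l
    have hs : lp.single p l (x l) = x l • (lp.single p l (1 : ℝ) : lp (fun _ : ℕ => ℝ) p) := by
      rw [← lp.single_smul]
      norm_num
    rw [ContinuousLinearMap.comp_apply, hs, map_smul]
    simp [lp.coeFn_smul]
  simpa only [hterm, ContinuousLinearMap.comp_apply, ev_apply] using h

lemma apply_nonneg [Fact (1 ≤ p)] (hp : p ≠ ∞)
    (A : lp (fun _ : ℕ => ℝ) p →L[ℝ] lp (fun _ : ℕ => ℝ) p)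
    (hA : ∀ k l : ℕ, 0 ≤ A (lp.single p l 1) k)
    (x : lp (fun _ : ℕ => ℝ) p) (hx : ∀ l, 0 ≤ x l) (k : ℕ) :
    0 ≤ A x k := by
  rw [← (hasSum_apply hp A x k).tsum_eq]
  exact tsum_nonneg fun l => mul_nonneg (hx l) (hA k l)

lemma entry_le [Fact (1 ≤ p)] (hp : p ≠ ∞)
    (A : lp (fun _ : ℕ => ℝ) p →L[ℝ] lp (fun _ : ℕ => ℝ) p)
    (hA : ∀ k l : ℕ, 0 ≤ A (lp.single p l 1) k)
    (x : lp (fun _ : ℕ => ℝ) p) (hx : ∀ l, 0 ≤ x l) (k l : ℕ) :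
    x l * A (lp.single p l 1) k ≤ A x k := by
  have h := hasSum_apply hp A x k
  rw [← h.tsum_eq]
  exact Summable.le_tsum h.summable l fun m _ => mul_nonneg (hx m) (hA k m)

lemma pow_entry_nonneg [Fact (1 ≤ p)] (hp : p ≠ ∞)
    (M : lp (fun _ : ℕ => ℝ) p →L[ℝ] lp (fun _ : ℕ => ℝ) p)
    (hMpos : ∀ k l : ℕ, 0 ≤ M (lp.single p l 1) k) :
    ∀ (n : ℕ) (j i : ℕ), 0 ≤ (M ^ n) (lp.single p j 1) i := by
  intro n
  induction n with
  | zero =>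
    intro j i
    simp only [pow_zero, ContinuousLinearMap.one_apply]
    rw [lp.single_apply, Pi.single_apply]
    split <;> norm_num
  | succ n ih =>
    intro j i
    rw [pow_succ', ContinuousLinearMap.mul_apply]
    exact apply_nonneg hp M hMpos _ (ih j) i

end ModulusQN

open ModulusQN

/-- If the modulus `M` of a bounded operator `T` on `ℓᵖ` (`1 ≤ p < ∞`) exists
(i.e. the matrix of `M` is the entrywise absolute value of the matrix of `T`)
and `M` is quasinilpotent, then `T` has a nontrivial closed invariant ideal. -/
theorem modulus_quasinilpotent_invariant_ideal
    (p : ℝ≥0∞) [Fact (1 ≤ p)] (hp : p ≠ ∞)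
    (T M : lp (fun _ : ℕ => ℝ) p →L[ℝ] lp (fun _ : ℕ => ℝ) p)
    (hM : ∀ i j : ℕ, M (lp.single p j 1) i = |T (lp.single p j 1) i|)
    (hq : Tendsto (fun n : ℕ => ‖M ^ n‖ ^ (1 / (n : ℝ))) atTop (nhds 0)) :
    ∃ J : Submodule ℝ (lp (fun _ : ℕ => ℝ) p),
      IsClosed (J : Set (lp (fun _ : ℕ => ℝ) p)) ∧ J ≠ ⊥ ∧ J ≠ ⊤ ∧
      (∀ x ∈ J, T x ∈ J) ∧
      (∀ x ∈ J, ∀ y : lp (fun _ : ℕ => ℝ) p, (∀ i, |y i| ≤ |x i|) → y ∈ J) := by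
  classical
  have hMpos : ∀ k l : ℕ, 0 ≤ M (lp.single p l 1) k := fun k l => by
    rw [hM k l]; exact abs_nonneg _
  have hpow := pow_entry_nonneg hp M hMpos
  -- Case split on irreducibility.
  by_cases hA : ∃ i j : ℕ, ∀ n : ℕ, (M ^ n) (lp.single p j 1) i = 0
  · obtain ⟨i₀, j₀, hA⟩ := hA
    set S : Set ℕ := {i | ∃ n : ℕ, (M ^ n) (lp.single p j₀ 1) i ≠ 0} with hS
    have hj₀S : j₀ ∈ S := by
      refine ⟨0, ?_⟩
      simp only [pow_zero, ContinuousLinearMap.one_apply]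
      rw [lp.single_apply_self]
      norm_num
    have hi₀S : i₀ ∉ S := by
      rintro ⟨n, hn⟩
      exact hn (hA n)
    -- invariance of S under the matrix of M
    have hInv : ∀ k, k ∉ S → ∀ l ∈ S, M (lp.single p l 1) k = 0 := by
      intro k hk l hl
      by_contra hne
      obtain ⟨n, hn⟩ := hl
      apply hk
      refine ⟨n + 1, ?_⟩
      have h1 : 0 < (M ^ n) (lp.single p j₀ 1) l :=
        lt_of_le_of_ne (hpow n j₀ l) (Ne.symm hn)
      have h2 : 0 < M (lp.single p l 1) k :=
        lt_of_le_of_ne (hMpos k l) (Ne.symm hne)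
      have h3 := entry_le hp M hMpos ((M ^ n) (lp.single p j₀ 1)) (hpow n j₀) k l
      have h4 : 0 < M ((M ^ n) (lp.single p j₀ 1)) k :=
        lt_of_lt_of_le (mul_pos h1 h2) h3
      rw [pow_succ', ContinuousLinearMap.mul_apply]
      exact h4.ne'
    -- the ideal
    refine ⟨{ carrier := {x : lp (fun _ : ℕ => ℝ) p | ∀ k, k ∉ S → x k = 0}
              add_mem' := fun {x y} hx hy k hk => by
                simp [lp.coeFn_add, hx k hk, hy k hk]
              zero_mem' := fun k _ => by simp [lp.coeFn_zero]
              smul_mem' := fun c x hx k hk => by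
                simp [lp.coeFn_smul, hx k hk] }, ?_, ?_, ?_, ?_, ?_⟩
    · -- closed
      have heq : {x : lp (fun _ : ℕ => ℝ) p | ∀ k, k ∉ S → x k = 0} =
          ⋂ (k : ℕ), ⋂ (_ : k ∉ S), (ev p k) ⁻¹' {0} := by
        ext x
        simp [Set.mem_iInter]
      show IsClosed {x : lp (fun _ : ℕ => ℝ) p | ∀ k, k ∉ S → x k = 0}
      rw [heq]
      exact isClosed_iInter fun k => isClosed_iInter fun _ =>
        isClosed_singleton.preimage (ev p k).continuous
    · -- ≠ ⊥
      rw [Submodule.ne_bot_iff]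
      refine ⟨lp.single p j₀ 1, fun k hk => ?_, fun h0 => ?_⟩
      · exact lp.single_apply_ne p j₀ 1 (fun h => hk (h ▸ hj₀S))
      · have : (lp.single p j₀ (1 : ℝ) : lp (fun _ : ℕ => ℝ) p) j₀
            = (0 : lp (fun _ : ℕ => ℝ) p) j₀ := by rw [h0]
        rw [lp.single_apply_self] at this
        simp at this
    · -- ≠ ⊤
      intro htop
      have hmem : lp.single p i₀ (1 : ℝ) ∈
          ({x : lp (fun _ : ℕ => ℝ) p | ∀ k, k ∉ S → x k = 0} : Set (lp (fun _ : ℕ => ℝ) p)) := by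
        rw [show ({x : lp (fun _ : ℕ => ℝ) p | ∀ k, k ∉ S → x k = 0} : Set (lp (fun _ : ℕ => ℝ) p)) = ↑(⊤ : Submodule ℝ (lp (fun _ : ℕ => ℝ) p)) by
          rw [← htop]; rfl]
        exact Submodule.mem_top
      have := hmem i₀ hi₀S
      rw [lp.single_apply_self] at this
      simp at this
    · -- T-invariance
      intro x hx k hk
      have h := hasSum_apply hp T x k
      have hterm : (fun l : ℕ => x l * T (lp.single p l 1) k) = fun _ => 0 := by
        funext l
        by_cases hl : l ∈ S
        · have : M (lp.single p l 1) k = 0 := hInv k hk l hl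
          rw [hM k l] at this
          rw [abs_eq_zero.mp this, mul_zero]
        · rw [hx l hl, zero_mul]
      rw [hterm] at h
      exact h.unique hasSum_zero
    · -- solid
      intro x hx y hy k hk
      have := hy k
      rw [hx k hk] at this
      simpa using abs_nonpos_iff.mp (by simpa using this)
  · -- irreducible case: contradiction with quasinilpotence
    exfalso
    push_neg at hA
    obtain ⟨n₁, hn₁⟩ := hA 1 0
    obtain ⟨n₂, hn₂⟩ := hA 0 1
    have h1 : 0 < (M ^ n₁) (lp.single p 0 1) 1 := lt_of_le_of_ne (hpow n₁ 0 1) (Ne.symm hn₁)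
    have h2 : 0 < (M ^ n₂) (lp.single p 1 1) 0 := lt_of_le_of_ne (hpow n₂ 1 0) (Ne.symm hn₂)
    obtain ⟨m, hm⟩ : ∃ m : ℕ, m = n₂ + n₁ := ⟨_, rfl⟩
    obtain ⟨c, hc⟩ : ∃ c : ℝ, c = (M ^ m) (lp.single p 0 1) 0 := ⟨_, rfl⟩
    have hcpos : 0 < c := by
      have h3 := entry_le hp (M ^ n₂) (fun a b => hpow n₂ b a) ((M ^ n₁) (lp.single p 0 1)) (hpow n₁ 0) 0 1
      have h4 : (M ^ n₂) ((M ^ n₁) (lp.single p 0 1)) = (M ^ m) (lp.single p 0 1) := by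
        rw [hm, pow_add, ContinuousLinearMap.mul_apply]
      rw [hc]
      rw [h4] at h3
      exact lt_of_lt_of_le (mul_pos h1 h2) h3
    have hn₂pos : n₂ ≠ 0 := by
      intro h0
      rw [h0] at hn₂
      apply hn₂
      simp only [pow_zero, ContinuousLinearMap.one_apply]
      exact lp.single_apply_ne p 1 1 (by norm_num)
    have hmpos : 0 < m := by omega
    -- c^k ≤ entry of M^(k*m)
    have hck : ∀ k : ℕ, c ^ k ≤ (M ^ (k * m)) (lp.single p 0 1) 0 := by
      intro k
      induction k with
      | zero =>
        simp only [pow_zero, zero_mul, ContinuousLinearMap.one_apply]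
        rw [lp.single_apply_self]
      | succ k ih =>
        have hsplit : (k + 1) * m = k * m + m := by ring
        have h5 := entry_le hp (M ^ (k * m)) (fun a b => hpow (k * m) b a)
          ((M ^ m) (lp.single p 0 1)) (hpow m 0) 0 0
        have h6 : (M ^ (k * m)) ((M ^ m) (lp.single p 0 1)) =
            (M ^ ((k + 1) * m)) (lp.single p 0 1) := by
          rw [hsplit, pow_add, ContinuousLinearMap.mul_apply]
        rw [h6] at h5
        calc c ^ (k + 1) = c * c ^ k := by ring
          _ ≤ c * ((M ^ (k * m)) (lp.single p 0 1) 0) :=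
              mul_le_mul_of_nonneg_left ih hcpos.le
          _ = (M ^ m) (lp.single p 0 1) 0 * (M ^ (k * m)) (lp.single p 0 1) 0 := by rw [hc]
          _ ≤ _ := h5
    -- norm lower bound
    have hptr : 0 < p.toReal :=
      ENNReal.toReal_pos (zero_lt_one.trans_le (Fact.out : 1 ≤ p)).ne' hp
    have hnorm1 : ‖(lp.single p (0 : ℕ) (1 : ℝ) : lp (fun _ : ℕ => ℝ) p)‖ = 1 := by
      have := lp.norm_single (E := fun _ : ℕ => ℝ) (zero_lt_one.trans_le (Fact.out : 1 ≤ p)) 0 (1 : ℝ)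
      simpa using this
    have hnormlb : ∀ k : ℕ, c ^ k ≤ ‖M ^ (k * m)‖ := by
      intro k
      calc c ^ k ≤ (M ^ (k * m)) (lp.single p 0 1) 0 := hck k
        _ ≤ ‖(M ^ (k * m)) (lp.single p 0 1)‖ := by
            have h := lp.norm_apply_le_norm
              (show p ≠ 0 from (zero_lt_one.trans_le (Fact.out : 1 ≤ p)).ne')
              ((M ^ (k * m)) (lp.single p 0 1)) 0
            rw [Real.norm_eq_abs] at h
            exact (le_abs_self _).trans h
        _ ≤ ‖M ^ (k * m)‖ * ‖(lp.single p (0 : ℕ) (1 : ℝ) : lp (fun _ : ℕ => ℝ) p)‖ :=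
            (M ^ (k * m)).le_opNorm _
        _ = ‖M ^ (k * m)‖ := by rw [hnorm1, mul_one]
    -- the limit contradiction
    obtain ⟨d, hd⟩ : ∃ d : ℝ, d = c ^ (1 / (m : ℝ)) := ⟨_, rfl⟩
    have hdpos : 0 < d := hd ▸ Real.rpow_pos_of_pos hcpos _
    have hev : ∀ᶠ n : ℕ in atTop, ‖M ^ n‖ ^ (1 / (n : ℝ)) < d :=
      hq (Iio_mem_nhds hdpos)
    obtain ⟨N, hN⟩ := eventually_atTop.mp hev
    obtain ⟨k, hk⟩ : ∃ k : ℕ, k = N + 1 := ⟨_, rfl⟩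
    obtain ⟨n, hn⟩ : ∃ n : ℕ, n = k * m := ⟨_, rfl⟩
    have hnN : N ≤ n := by
      have : k ≤ k * m := Nat.le_mul_of_pos_right k hmpos
      omega
    have hlt := hN n hnN
    have hge : d ≤ ‖M ^ n‖ ^ (1 / (n : ℝ)) := by
      have hcn : (0 : ℝ) < c ^ k := pow_pos hcpos k
      have hnb : c ^ k ≤ ‖M ^ n‖ := by rw [hn]; exact hnormlb k
      have h7 : (c ^ k : ℝ) ^ (1 / (n : ℝ)) ≤ ‖M ^ n‖ ^ (1 / (n : ℝ)) :=
        Real.rpow_le_rpow hcn.le hnb (by positivity)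
      have h8 : (c ^ k : ℝ) ^ (1 / (n : ℝ)) = d := by
        rw [← Real.rpow_natCast c k, ← Real.rpow_mul hcpos.le, hd]
        congr 1
        have hkm : ((n : ℕ) : ℝ) = (k : ℝ) * (m : ℝ) := by
          rw [hn]; push_cast; ring
        rw [hkm]
        have hk0 : (k : ℝ) ≠ 0 := Nat.cast_ne_zero.mpr (by omega)
        have hm0 : (m : ℝ) ≠ 0 := Nat.cast_ne_zero.mpr hmpos.ne'
        field_simp
      rw [← h8]
      exact h7
    exact absurd hlt (not_lt.mpr hge)
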